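/- For all real $x$ with $0 < x < \sqrt{2}\,\pi$, one has $\sinh(x) \le x(1 + 2x)$, equivalently $\frac{\sinh(x)}{x} \le 1 + 2x$. -/

import Mathlib

open Real

lemma exp_chord {a b A B x : ℝ} (ha : Real.exp a ≤ A) (hb : Real.exp b ≤ B)
    (h1 : a ≤ x) (h2 : x ≤ b) (hab : a < b) :
    Real.exp x ≤ ((b - x) * A + (x - a) * B) / (b - a) := by
  have hd : (0:ℝ) < b - a := by linarith
  have w1 : (0:ℝ) ≤ (b - x)/(b - a) := div_nonneg (by linarith) hd.le
  have w2 : (0:ℝ) ≤ (x - a)/(b - a) := div_nonneg (by linarith) hd.le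
  have wsum : (b - x)/(b - a) + (x - a)/(b - a) = 1 := by field_simp; ring
  have key := convexOn_exp.2 (Set.mem_univ a) (Set.mem_univ b) w1 w2 wsum
  have hpt : ((b - x)/(b - a)) • a + ((x - a)/(b - a)) • b = x := by
    rw [smul_eq_mul, smul_eq_mul, div_mul_eq_mul_div, div_mul_eq_mul_div, ← add_div, div_eq_iff hd.ne']
    ring
  rw [hpt] at key
  simp only [smul_eq_mul] at key
  have h1' : (b - x)/(b - a) * Real.exp a ≤ (b - x)/(b - a) * A := by
    exact mul_le_mul_of_nonneg_left ha (div_nonneg (by linarith) hd.le)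
  have h2' : (x - a)/(b - a) * Real.exp b ≤ (x - a)/(b - a) * B := by
    exact mul_le_mul_of_nonneg_left hb (div_nonneg (by linarith) hd.le)
  calc Real.exp x ≤ (b - x)/(b - a) * A + (x - a)/(b - a) * B := by linarith
    _ = ((b - x) * A + (x - a) * B) / (b - a) := by ring

lemma exp_one_sq : Real.exp 2 = Real.exp 1 * Real.exp 1 := by
  rw [← Real.exp_add]; norm_num

lemma exp35_lt : Real.exp 3.5 < 33.12 := by
  have h7 : Real.exp 3.5 * Real.exp 3.5 = Real.exp 7 := by
    rw [← Real.exp_add]; norm_num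
  have h7' : Real.exp 7 = Real.exp 1 ^ 7 := by
    rw [← Real.exp_nat_mul]; norm_num
  have he := Real.exp_one_lt_d9
  have hp : Real.exp 1 ^ 7 < 2.7182818286 ^ 7 := by
    gcongr
  have : Real.exp 3.5 * Real.exp 3.5 < 33.12 * 33.12 := by
    rw [h7, h7']
    calc Real.exp 1 ^ 7 < 2.7182818286 ^ 7 := hp
      _ < 33.12 * 33.12 := by norm_num
  nlinarith [Real.exp_pos 3.5]

lemma exp45_lt : Real.exp 4.5 < 90.02 := by
  have h9 : Real.exp 4.5 * Real.exp 4.5 = Real.exp 9 := by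
    rw [← Real.exp_add]; norm_num
  have h9' : Real.exp 9 = Real.exp 1 ^ 9 := by
    rw [← Real.exp_nat_mul]; norm_num
  have he := Real.exp_one_lt_d9
  have hp : Real.exp 1 ^ 9 < 2.7182818286 ^ 9 := by
    gcongr
  have : Real.exp 4.5 * Real.exp 4.5 < 90.02 * 90.02 := by
    rw [h9, h9']
    calc Real.exp 1 ^ 9 < 2.7182818286 ^ 9 := hp
      _ < 90.02 * 90.02 := by norm_num
  nlinarith [Real.exp_pos 4.5]

lemma sqrt2pi_lt : Real.sqrt 2 * Real.pi < 4.443 := by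
  have h2 : Real.sqrt 2 < 1.41422 := by
    rw [show (1.41422:ℝ) = Real.sqrt (1.41422^2) by
      rw [Real.sqrt_sq]; norm_num]
    apply Real.sqrt_lt_sqrt (by norm_num)
    norm_num
  have hpi : Real.pi < 3.1416 := Real.pi_lt_d4
  have h2' : (0:ℝ) < Real.sqrt 2 := Real.sqrt_pos.mpr (by norm_num)
  nlinarith [Real.pi_gt_three]

/-- Key bound for small x: sinh x ≤ x + 2x² for 0 ≤ x ≤ 1. -/
lemma sinh_small {x : ℝ} (h0 : 0 ≤ x) (h1 : x ≤ 1) : Real.sinh x ≤ x * (1 + 2 * x) := by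
  have hb1 := Real.exp_bound (x := x) (by rw [abs_of_nonneg h0]; exact h1) (n := 4) (by norm_num)
  have hb2 := Real.exp_bound (x := -x) (by rw [abs_neg, abs_of_nonneg h0]; exact h1) (n := 4) (by norm_num)
  rw [abs_of_nonneg h0] at hb1
  rw [abs_neg, abs_of_nonneg h0] at hb2
  rw [abs_le] at hb1 hb2
  obtain ⟨-, hb1⟩ := hb1
  obtain ⟨hb2, -⟩ := hb2
  norm_num [Finset.sum_range_succ, Nat.factorial] at hb1 hb2
  rw [Real.sinh_eq]
  have h3 : x ^ 3 ≤ x ^ 2 := by nlinarith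
  have h4 : x ^ 4 ≤ x ^ 2 := by nlinarith
  nlinarith [h3, h4]

theorem sinh_le_of_lt_sqrt_two_mul_pi (x : ℝ) (hx0 : 0 < x) (hx : x < Real.sqrt 2 * Real.pi) :
    Real.sinh x ≤ x * (1 + 2 * x) ∧ Real.sinh x / x ≤ 1 + 2 * x := by
  have hc : x < 4.443 := hx.trans sqrt2pi_lt
  have main : Real.sinh x ≤ x * (1 + 2 * x) := by
    rcases le_or_gt x 1 with h1 | h1
    · exact sinh_small hx0.le h1
    · rw [Real.sinh_eq]
      have hneg : (0:ℝ) < Real.exp (-x) := Real.exp_pos _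
      rcases le_or_gt x 3.5 with h35 | h35
      · -- chord on [1, 3.5]
        have hch := exp_chord (a := 1) (b := 3.5) (A := 2.7182818286) (B := 33.12)
          Real.exp_one_lt_d9.le exp35_lt.le h1.le h35 (by norm_num)
        rw [le_div_iff₀ (by norm_num : (0:ℝ) < 3.5 - 1)] at hch
        nlinarith [sq_nonneg (x - 1.27), hneg.le]
      · -- chord on [3.5, 4.5], x < 4.443
        have hch := exp_chord (a := 3.5) (b := 4.5) (A := 33.12) (B := 90.02)
          exp35_lt.le exp45_lt.le h35.le (by linarith) (by norm_num)
        rw [le_div_iff₀ (by norm_num : (0:ℝ) < 4.5 - 3.5)] at hch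
        nlinarith [hneg.le, mul_nonneg (show (0:ℝ) ≤ 4.443 - x by linarith) (show (0:ℝ) ≤ 37 - 4*x by linarith), sq_nonneg (x - 4.443)]
  refine ⟨main, ?_⟩
  rw [div_le_iff₀ hx0]
  linarith [main]
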